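/- Let m ≥ 1, let O ⊆ ℝ^m be a nonempty open convex set, let f, g : O → ℝ be convex, and let X ⊆ O be a nonempty compact convex set containing at least two points. Let ε > 0, and suppose x* ∈ X satisfies g(x*) ≤ 0 and f(x*) ≤ f(x) for every x ∈ X with g(x) ≤ 0. Let ω : O → ℝ be convex and differentiable, let α > 0 satisfy ω(x) − ω(y) − ⟨∇ω(y), x − y⟩ ≥ (α/2)‖x − y‖² for all x, y ∈ X, let Θ > 0 satisfy D_ω(u,v) ≤ Θ for all u, v ∈ X, and let Ω ≥ 0 satisfy ‖x − y‖ ≤ Ω for all x, y ∈ X. Let κ₁ > 0, κ₂ > 0, and suppose sequences (x_k)_{k≥1} in X, (E_k)_{k≥1} in ℝ^m \ {0}, (e_k)_{k≥1} in ℝ^m, and (Δ_k)_{k≥1} with 0 < Δ_k ≤ 1/√(k+1) satisfy, for every k ≥ 1: e_k ∈ ∂f(x_k) if g(x_k) ≤ ε and e_k ∈ ∂g(x_k) otherwise; ‖e_k‖ ≤ κ₁; ‖e_k − E_k‖ ≤ κ₂ Δ_k; and, with t_k = √(Θα)/(‖E_k‖ √k), the point x_{k+1} minimizes u ↦ ⟨t_k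 E_k − ∇ω(x_k), u⟩ + ω(u) over X. Then for every integer n ≥ 4, setting C = 2·√(Θ/α)·max{κ₁, κ₂}·(1 + ln 2)/(2 − √2) + √2·κ₂·Ω, either there exists k ∈ {1, ..., n} with g(x_k) ≤ ε and f(x_k) − f(x*) ≤ C/√n, or ε ≤ C/√n. -/

import Mathlib

open scoped RealInnerProductSpace
open Filter Finset

/-- The subdifferential of `f : O → ℝ` at `x`:
`∂f(x) = {v : f(y) ≥ f(x) + ⟪v, y - x⟫ for all y ∈ O}`. -/
def subdiff {m : ℕ} (O : Set (EuclideanSpace ℝ (Fin m)))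
    (f : EuclideanSpace ℝ (Fin m) → ℝ) (x : EuclideanSpace ℝ (Fin m)) :
    Set (EuclideanSpace ℝ (Fin m)) :=
  {v | ∀ y ∈ O, f x + ⟪v, y - x⟫ ≤ f y}

/-- The Bregman distance associated to a differentiable function `ω`. -/
noncomputable def bregman {m : ℕ} (ω : EuclideanSpace ℝ (Fin m) → ℝ)
    (u v : EuclideanSpace ℝ (Fin m)) : ℝ :=
  ω u - ω v - ⟪gradient ω v, u - v⟫


-- telescoping
lemma telescope_D (F : ℕ → ℝ) (a b : ℕ) (h : a ≤ b) :
    ∑ k ∈ Finset.Icc a b, (F k - F (k+1)) = F a - F (b+1) := by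
  induction b with
  | zero => interval_cases a; simp
  | succ b ih =>
    rcases Nat.lt_or_ge a (b+1) with h' | h'
    · rw [Finset.sum_Icc_succ_top (by omega), ih (by omega)]; ring
    · have : a = b + 1 := by omega
      subst this; simp

lemma sqrt_term (k : ℕ) (hk : 1 ≤ k) :
    2 * Real.sqrt ((k:ℝ)+1) - 2 * Real.sqrt k ≤ 1 / Real.sqrt k := by
  have hk1 : (1:ℝ) ≤ (k:ℝ) := by exact_mod_cast hk
  set s := Real.sqrt (k:ℝ) with hs
  have hs1 : 1 ≤ s := by rw [hs, show (1:ℝ) = Real.sqrt 1 by simp]; exact Real.sqrt_le_sqrt hk1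
  have hs2 : s^2 = k := Real.sq_sqrt (by linarith)
  have key : Real.sqrt ((k:ℝ)+1) ≤ s + 1/(2*s) := by
    rw [show s + 1/(2*s) = Real.sqrt ((s + 1/(2*s))^2) from (Real.sqrt_sq (by positivity)).symm]
    apply Real.sqrt_le_sqrt
    have hspos : 0 < s := by linarith
    have expand : (s + 1/(2*s))^2 = s^2 + 1 + 1/(4*s^2) := by field_simp; ring
    rw [expand, hs2]
    have hpos : 0 < 1/(4*(k:ℝ)) := one_div_pos.mpr (by linarith)
    linarith
  have hspos : 0 < s := by linarith
  calc 2 * Real.sqrt ((k:ℝ)+1) - 2*s ≤ 2*(s + 1/(2*s)) - 2*s := by linarith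
    _ = 1/s := by rw [mul_add, add_sub_cancel_left]; field_simp

lemma sum_inv_sqrt_ge (a b : ℕ) (ha : 1 ≤ a) (hab : a ≤ b) :
    2 * (Real.sqrt ((b:ℝ)+1) - Real.sqrt (a:ℝ)) ≤ ∑ k ∈ Finset.Icc a b, 1 / Real.sqrt (k:ℝ) := by
  set F : ℕ → ℝ := fun k => -(2 * Real.sqrt (k:ℝ)) with hF
  have ht := telescope_D F a b hab
  have h2 : ∑ k ∈ Finset.Icc a b, (2 * Real.sqrt ((k:ℝ)+1) - 2 * Real.sqrt (k:ℝ))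
      = 2 * (Real.sqrt ((b:ℝ)+1) - Real.sqrt (a:ℝ)) := by
    have hc : ∑ k ∈ Finset.Icc a b, (2 * Real.sqrt ((k:ℝ)+1) - 2 * Real.sqrt (k:ℝ))
        = ∑ k ∈ Finset.Icc a b, (F k - F (k+1)) := by
      apply Finset.sum_congr rfl; intro k _; simp only [hF]; push_cast; ring
    rw [hc, ht]; simp only [hF]; push_cast; ring
  rw [← h2]
  apply Finset.sum_le_sum
  intro k hk
  exact sqrt_term k (le_trans ha (Finset.mem_Icc.mp hk).1)

lemma log_term (r : ℝ) (hr : 2 ≤ r) : 1 / r ≤ Real.log r - Real.log (r - 1) := by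
  have h1 : (0:ℝ) < r - 1 := by linarith
  have h2 : (0:ℝ) < r := by linarith
  have := Real.log_le_sub_one_of_pos (show 0 < (r-1)/r by positivity)
  rw [Real.log_div (by linarith) (by linarith)] at this
  have : (r-1)/r - 1 = -(1/r) := by field_simp; ring
  linarith [Real.log_le_sub_one_of_pos (show 0 < (r-1)/r by positivity),
    Real.log_div (ne_of_gt h1) (ne_of_gt h2)]

lemma sum_inv_le (a b : ℕ) (ha : 2 ≤ a) (hab : a ≤ b) :
    ∑ k ∈ Finset.Icc a b, 1 / (k:ℝ) ≤ Real.log (b:ℝ) - Real.log ((a:ℝ) - 1) := by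
  set F : ℕ → ℝ := fun k => -Real.log ((k:ℝ) - 1) with hF
  have ht := telescope_D F a b hab
  have h2 : ∑ k ∈ Finset.Icc a b, (Real.log ((k:ℝ)+1-1) - Real.log ((k:ℝ)-1))
      = Real.log ((b:ℝ)+1-1) - Real.log ((a:ℝ)-1) := by
    have hc : ∑ k ∈ Finset.Icc a b, (Real.log ((k:ℝ)+1-1) - Real.log ((k:ℝ)-1))
        = ∑ k ∈ Finset.Icc a b, (F k - F (k+1)) := by
      apply Finset.sum_congr rfl; intro k _; simp only [hF]; push_cast; ring
    rw [hc, ht]; simp only [hF]; push_cast; ring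
  have h3 : ∀ k ∈ Finset.Icc a b, 1/(k:ℝ) ≤ Real.log ((k:ℝ)+1-1) - Real.log ((k:ℝ)-1) := by
    intro k hk
    have hk2 : 2 ≤ k := le_trans ha (Finset.mem_Icc.mp hk).1
    have : (2:ℝ) ≤ (k:ℝ) := by exact_mod_cast hk2
    have := log_term (k:ℝ) this
    simpa using this
  calc ∑ k ∈ Finset.Icc a b, 1/(k:ℝ) ≤ ∑ k ∈ Finset.Icc a b, (Real.log ((k:ℝ)+1-1) - Real.log ((k:ℝ)-1)) :=
        Finset.sum_le_sum h3
    _ = Real.log ((b:ℝ)+1-1) - Real.log ((a:ℝ)-1) := h2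
    _ = Real.log (b:ℝ) - Real.log ((a:ℝ)-1) := by norm_num

lemma dir_opt {m : ℕ} (ω : EuclideanSpace ℝ (Fin m) → ℝ)
    (p u c : EuclideanSpace ℝ (Fin m))
    (hd : DifferentiableAt ℝ ω p)
    (hm : ∀ τ : ℝ, 0 ≤ τ → τ ≤ 1 →
      ⟪c, p⟫ + ω p ≤ ⟪c, p + τ • (u - p)⟫ + ω (p + τ • (u - p))) :
    0 ≤ ⟪c + gradient ω p, u - p⟫ := by
  set γ : ℝ → EuclideanSpace ℝ (Fin m) := fun τ => p + τ • (u - p) with hγ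
  have hγ0 : γ 0 = p := by simp [hγ]
  have hγd : HasDerivAt γ (u - p) 0 := by
    have : HasDerivAt (fun τ : ℝ => τ • (u - p)) ((1:ℝ) • (u - p)) 0 :=
      (hasDerivAt_id (0:ℝ)).smul_const (u - p)
    simpa [hγ] using this.const_add p
  set h : ℝ → ℝ := fun τ => ⟪c, γ τ⟫ + ω (γ τ) with hh
  have hgrad : HasGradientAt ω (gradient ω p) p := hd.hasGradientAt
  have hfd : HasFDerivAt ω (InnerProductSpace.toDual ℝ _ (gradient ω p)) p := hgrad
  have hωd : HasDerivAt (fun τ => ω (γ τ)) ⟪gradient ω p, u - p⟫ 0 := by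
    have hfd' : HasFDerivAt ω (InnerProductSpace.toDual ℝ _ (gradient ω p)) (γ 0) := by
      rw [hγ0]; exact hfd
    have := hfd'.comp_hasDerivAt (0:ℝ) hγd
    simpa [InnerProductSpace.toDual_apply_apply, Function.comp_def] using this
  have hinnd : HasDerivAt (fun τ => ⟪c, γ τ⟫) ⟪c, u - p⟫ 0 := by
    have : (fun τ => ⟪c, γ τ⟫) = fun τ : ℝ => ⟪c, p⟫ + τ * ⟪c, u - p⟫ := by
      funext τ; simp only [hγ, inner_add_right, real_inner_smul_right]
    rw [this]
    simpa using ((hasDerivAt_id (0:ℝ)).mul_const ⟪c, u - p⟫).const_add ⟪c, p⟫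
  have hhd : HasDerivAt h (⟪c, u - p⟫ + ⟪gradient ω p, u - p⟫) 0 := hinnd.add hωd
  have hslope : Tendsto (slope h 0) (nhdsWithin 0 (Set.Ioi 0))
      (nhds (⟪c, u - p⟫ + ⟪gradient ω p, u - p⟫)) := by
    have := hasDerivAt_iff_tendsto_slope.mp hhd
    exact this.mono_left (nhdsWithin_mono _ (fun t ht => ne_of_gt ht))
  have hev : ∀ᶠ τ in nhdsWithin (0:ℝ) (Set.Ioi 0), 0 ≤ slope h 0 τ := by
    filter_upwards [Ioc_mem_nhdsGT_of_mem (Set.mem_Ico.mpr ⟨le_refl _, zero_lt_one⟩)] with τ hτ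
    have h0 : h 0 = ⟪c, p⟫ + ω p := by simp [hh, hγ0]
    have := hm τ (le_of_lt hτ.1) hτ.2
    have hτpos : 0 < τ := hτ.1
    have hle : h 0 ≤ h τ := by rw [h0]; exact this
    rw [slope_def_field, div_eq_inv_mul]
    have : 0 ≤ h τ - h 0 := by linarith
    exact mul_nonneg (inv_nonneg.mpr (by linarith)) this
  have := ge_of_tendsto hslope hev
  rw [inner_add_left]
  linarith [this]


set_option maxHeartbeats 2000000 in
theorem dfo_comirror_convergence {m : ℕ} (hm : 1 ≤ m)
    (O : Set (EuclideanSpace ℝ (Fin m))) (hOne : O.Nonempty) (hOopen : IsOpen O)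
    (hOconv : Convex ℝ O)
    (f g : EuclideanSpace ℝ (Fin m) → ℝ)
    (hf : ConvexOn ℝ O f) (hg : ConvexOn ℝ O g)
    (X : Set (EuclideanSpace ℝ (Fin m))) (hXne : X.Nonempty) (hXcpt : IsCompact X)
    (hXconv : Convex ℝ X) (hXO : X ⊆ O)
    (hXtwo : ∃ a ∈ X, ∃ b ∈ X, a ≠ b)
    (ε : ℝ) (hε : 0 < ε)
    (xstar : EuclideanSpace ℝ (Fin m)) (hxstar : xstar ∈ X) (hgxstar : g xstar ≤ 0)
    (hopt : ∀ x ∈ X, g x ≤ 0 → f xstar ≤ f x)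
    (ω : EuclideanSpace ℝ (Fin m) → ℝ) (hωconv : ConvexOn ℝ O ω)
    (hωdiff : ∀ x ∈ O, DifferentiableAt ℝ ω x)
    (α : ℝ) (hα : 0 < α)
    (hstrong : ∀ x ∈ X, ∀ y ∈ X,
      ω x - ω y - ⟪gradient ω y, x - y⟫ ≥ α / 2 * ‖x - y‖ ^ 2)
    (Θ : ℝ) (hΘpos : 0 < Θ) (hΘ : ∀ u ∈ X, ∀ v ∈ X, bregman ω u v ≤ Θ)
    (Ω : ℝ) (hΩ0 : 0 ≤ Ω) (hΩ : ∀ x ∈ X, ∀ y ∈ X, ‖x - y‖ ≤ Ω)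
    (κ₁ κ₂ : ℝ) (hκ₁ : 0 < κ₁) (hκ₂ : 0 < κ₂)
    (x : ℕ → EuclideanSpace ℝ (Fin m)) (hx : ∀ k, 1 ≤ k → x k ∈ X)
    (E : ℕ → EuclideanSpace ℝ (Fin m)) (hE : ∀ k, 1 ≤ k → E k ≠ 0)
    (e : ℕ → EuclideanSpace ℝ (Fin m))
    (Δ : ℕ → ℝ)
    (hΔ : ∀ k, 1 ≤ k → 0 < Δ k ∧ Δ k ≤ 1 / Real.sqrt ((k : ℝ) + 1))
    (hsub : ∀ k, 1 ≤ k →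
      (g (x k) ≤ ε → e k ∈ subdiff O f (x k)) ∧
      (¬g (x k) ≤ ε → e k ∈ subdiff O g (x k)))
    (hebd : ∀ k, 1 ≤ k → ‖e k‖ ≤ κ₁)
    (herr : ∀ k, 1 ≤ k → ‖e k - E k‖ ≤ κ₂ * Δ k)
    (hmin : ∀ k, 1 ≤ k → ∀ u ∈ X,
      ⟪(Real.sqrt (Θ * α) / (‖E k‖ * Real.sqrt (k : ℝ))) • E k - gradient ω (x k),
          x (k + 1)⟫ + ω (x (k + 1)) ≤
        ⟪(Real.sqrt (Θ * α) / (‖E k‖ * Real.sqrt (k : ℝ))) • E k - gradient ω (x k),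
          u⟫ + ω u) :
    ∀ n : ℕ, 4 ≤ n →
      (∃ k, 1 ≤ k ∧ k ≤ n ∧ g (x k) ≤ ε ∧
          f (x k) - f xstar ≤
            (2 * Real.sqrt (Θ / α) * max κ₁ κ₂ * (1 + Real.log 2) / (2 - Real.sqrt 2) +
                Real.sqrt 2 * κ₂ * Ω) / Real.sqrt (n : ℝ)) ∨
        ε ≤ (2 * Real.sqrt (Θ / α) * max κ₁ κ₂ * (1 + Real.log 2) / (2 - Real.sqrt 2) +
                Real.sqrt 2 * κ₂ * Ω) / Real.sqrt (n : ℝ) := by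
  intro n hn
  by_contra Hc
  push_neg at Hc
  obtain ⟨H1, H2⟩ := Hc
  set M : ℝ := max κ₁ κ₂ with hMdef
  set C : ℝ := 2 * Real.sqrt (Θ / α) * M * (1 + Real.log 2) / (2 - Real.sqrt 2) +
      Real.sqrt 2 * κ₂ * Ω with hCdef
  set sn : ℝ := Real.sqrt (n : ℝ) with hsndef
  set tt : ℕ → ℝ := fun k => Real.sqrt (Θ * α) / (‖E k‖ * Real.sqrt (k : ℝ)) with httdef
  set D : ℕ → ℝ := fun k => bregman ω xstar (x k) with hDdef
  set k₀ : ℕ := (n + 1) / 2 with hk₀def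
  have hk₀ : n ≤ 2 * k₀ ∧ 2 * k₀ ≤ n + 1 ∧ 2 ≤ k₀ ∧ k₀ ≤ n := by omega
  have hMpos : 0 < M := lt_of_lt_of_le hκ₁ (le_max_left _ _)
  have hsnpos : 0 < sn := Real.sqrt_pos.mpr (by exact_mod_cast (show (0:ℕ) < n by omega))
  have hsqrt2 : Real.sqrt 2 < 2 := by
    have := Real.sqrt_lt_sqrt (by norm_num : (0:ℝ) ≤ 2) (by norm_num : (2:ℝ) < 4)
    rwa [show (4:ℝ) = 2^2 by norm_num, Real.sqrt_sq (by norm_num : (0:ℝ) ≤ 2)] at this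
  have hlog2 : 0 < Real.log 2 := Real.log_pos one_lt_two
  have hΘα : 0 < Real.sqrt (Θ * α) := Real.sqrt_pos.mpr (mul_pos hΘpos hα)
  have hΘdα : 0 < Real.sqrt (Θ / α) := Real.sqrt_pos.mpr (div_pos hΘpos hα)
  set C₁ : ℝ := 2 * Real.sqrt (Θ / α) * M * (1 + Real.log 2) / (2 - Real.sqrt 2) with hC₁def
  have hC₁pos : 0 < C₁ := by
    apply div_pos (by positivity) (by linarith)
  have hCsub : C - Real.sqrt 2 * κ₂ * Ω = C₁ := by rw [hCdef]; ring
  -- per-step inequality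
  have key : ∀ k, k₀ ≤ k → k ≤ n →
      C₁ / sn * tt k < Θ / (2 * (k:ℝ)) + (D k - D (k + 1)) := by
    intro k hkl hku
    have hk1 : 1 ≤ k := by omega
    have hxk : x k ∈ X := hx k hk1
    have hp : x (k + 1) ∈ X := hx (k + 1) (by omega)
    have hkRpos : (0:ℝ) < (k:ℝ) := by exact_mod_cast (show 0 < k by omega)
    have hskpos : 0 < Real.sqrt (k:ℝ) := Real.sqrt_pos.mpr hkRpos
    have hEk : 0 < ‖E k‖ := norm_pos_iff.mpr (hE k hk1)
    have httpos : 0 < tt k := div_pos hΘα (mul_pos hEk hskpos)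
    set p := x (k + 1) with hpdef
    set c : EuclideanSpace ℝ (Fin m) := tt k • E k - gradient ω (x k) with hcdef
    -- directional optimality
    have hdo : 0 ≤ ⟪c + gradient ω p, xstar - p⟫ := by
      apply dir_opt ω p xstar c (hωdiff p (hXO hp))
      intro τ hτ0 hτ1
      have hu : p + τ • (xstar - p) ∈ X := by
        have := hXconv hp hxstar (by linarith : (0:ℝ) ≤ 1 - τ) hτ0 (by ring)
        convert this using 1
        rw [smul_sub, sub_smul, one_smul]; abel
      exact hmin k hk1 (p + τ • (xstar - p)) hu
    -- three-point identity
    have three : ⟪gradient ω p - gradient ω (x k), xstar - p⟫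
        = D k - D (k + 1) - bregman ω p (x k) := by
      simp only [hDdef, bregman, inner_sub_left, inner_sub_right, ← hpdef]
      ring
    have hexp : ⟪c + gradient ω p, xstar - p⟫
        = tt k * ⟪E k, xstar - p⟫ + ⟪gradient ω p - gradient ω (x k), xstar - p⟫ := by
      simp only [hcdef, inner_sub_left, inner_add_left, real_inner_smul_left]
      ring
    -- strong convexity
    have hsc : bregman ω p (x k) ≥ α / 2 * ‖p - x k‖ ^ 2 := hstrong p hp (x k) hxk
    -- Cauchy-Schwarz for the step term
    have hCS : ⟪E k, x k - p⟫ ≤ ‖E k‖ * ‖x k - p‖ := real_inner_le_norm _ _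
    have hnormrev : ‖x k - p‖ = ‖p - x k‖ := norm_sub_rev _ _
    have htE : tt k * ‖E k‖ = Real.sqrt (Θ * α) / Real.sqrt (k:ℝ) := by
      rw [httdef]; field_simp
    have hsqΘα : Real.sqrt (Θ * α) ^ 2 = Θ * α := Real.sq_sqrt (by positivity)
    have hsqk : Real.sqrt (k:ℝ) ^ 2 = (k:ℝ) := Real.sq_sqrt (by positivity)
    have hyoung : tt k * (‖E k‖ * ‖x k - p‖) - α / 2 * ‖p - x k‖ ^ 2 ≤ Θ / (2 * (k:ℝ)) := by
      rw [hnormrev]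
      have h1 : tt k * (‖E k‖ * ‖p - x k‖) = (tt k * ‖E k‖) * ‖p - x k‖ := by ring
      have h2 : (tt k * ‖E k‖) ^ 2 = Θ / (k:ℝ) * α := by
        rw [htE, div_pow, hsqΘα, hsqk]; field_simp
      have e : Θ / (2 * (k:ℝ)) = (tt k * ‖E k‖) ^ 2 / (2 * α) := by
        rw [h2]; field_simp
      rw [e, h1, le_div_iff₀ (by positivity : (0:ℝ) < 2 * α)]
      nlinarith [sq_nonneg (tt k * ‖E k‖ - α * ‖p - x k‖)]
    -- main upper bound on tt k * ⟪E k, x k - xstar⟫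
    have hsplit : ⟪E k, x k - xstar⟫ = ⟪E k, x k - p⟫ + ⟪E k, p - xstar⟫ := by
      rw [← inner_add_right]; congr 1; abel
    have hflip : ⟪E k, xstar - p⟫ = -⟪E k, p - xstar⟫ := by
      rw [show xstar - p = -(p - xstar) by abel, inner_neg_right]
    have hupper : tt k * ⟪E k, x k - xstar⟫ ≤ Θ / (2 * (k:ℝ)) + (D k - D (k + 1)) := by
      have h0 : tt k * ⟪E k, p - xstar⟫ ≤ D k - D (k + 1) - bregman ω p (x k) := by
        rw [hexp, three] at hdo
        rw [hflip] at hdo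
        linarith
      have h1 : tt k * ⟪E k, x k - p⟫ ≤ tt k * (‖E k‖ * ‖x k - p‖) :=
        mul_le_mul_of_nonneg_left hCS (le_of_lt httpos)
      rw [hsplit, mul_add]
      linarith
    -- lower bound on ⟪E k, x k - xstar⟫
    have hΔk := hΔ k hk1
    have hXnorm : ‖x k - xstar‖ ≤ Ω := hΩ _ hxk _ hxstar
    have hCS2 : ⟪e k - E k, x k - xstar⟫ ≤ κ₂ * Δ k * Ω := by
      calc ⟪e k - E k, x k - xstar⟫ ≤ ‖e k - E k‖ * ‖x k - xstar‖ := real_inner_le_norm _ _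
        _ ≤ (κ₂ * Δ k) * Ω := by
            exact mul_le_mul (herr k hk1) hXnorm (norm_nonneg _)
              (le_of_lt (mul_pos hκ₂ (hΔ k hk1).1))
    have hek : C / sn < ⟪e k, x k - xstar⟫ := by
      by_cases hgk : g (x k) ≤ ε
      · have hsg := (hsub k hk1).1 hgk xstar (hXO hxstar)
        have hH1 := H1 k hk1 hku hgk
        have : ⟪e k, xstar - x k⟫ = -⟪e k, x k - xstar⟫ := by
          rw [show xstar - x k = -(x k - xstar) by abel, inner_neg_right]
        rw [this] at hsg
        linarith
      · have hsg := (hsub k hk1).2 hgk xstar (hXO hxstar)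
        have : ⟪e k, xstar - x k⟫ = -⟪e k, x k - xstar⟫ := by
          rw [show xstar - x k = -(x k - xstar) by abel, inner_neg_right]
        rw [this] at hsg
        push_neg at hgk
        linarith
    have hEsplit : ⟪E k, x k - xstar⟫ = ⟪e k, x k - xstar⟫ - ⟪e k - E k, x k - xstar⟫ := by
      rw [inner_sub_left]; ring
    have hlow : C / sn - κ₂ * Δ k * Ω < ⟪E k, x k - xstar⟫ := by
      rw [hEsplit]; linarith
    -- Δ_k bound: κ₂ * Δ k * Ω ≤ √2 κ₂ Ω / sn
    have hΔbd : κ₂ * Δ k * Ω ≤ Real.sqrt 2 * κ₂ * Ω / sn := by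
      have hk1pos : (0:ℝ) < (k:ℝ) + 1 := by positivity
      have hsk1 : 0 < Real.sqrt ((k:ℝ) + 1) := Real.sqrt_pos.mpr hk1pos
      have hnle : (n:ℝ) ≤ 2 * ((k:ℝ) + 1) := by
        have : n ≤ 2 * (k + 1) := by omega
        exact_mod_cast this
      have hsn2 : sn ≤ Real.sqrt 2 * Real.sqrt ((k:ℝ) + 1) := by
        rw [hsndef, ← Real.sqrt_mul (by norm_num : (0:ℝ) ≤ 2)]
        exact Real.sqrt_le_sqrt hnle
      have hΔ2 : Δ k ≤ Real.sqrt 2 / sn := by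
        calc Δ k ≤ 1 / Real.sqrt ((k:ℝ) + 1) := hΔk.2
          _ ≤ Real.sqrt 2 / sn := by
              rw [div_le_div_iff₀ hsk1 hsnpos]
              linarith
      calc κ₂ * Δ k * Ω ≤ κ₂ * (Real.sqrt 2 / sn) * Ω := by
            apply mul_le_mul_of_nonneg_right _ hΩ0
            exact mul_le_mul_of_nonneg_left hΔ2 (le_of_lt hκ₂)
        _ = Real.sqrt 2 * κ₂ * Ω / sn := by ring
    -- combine
    have hmain : tt k * (C / sn - κ₂ * Δ k * Ω) < Θ / (2 * (k:ℝ)) + (D k - D (k + 1)) :=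
      lt_of_lt_of_le (by exact (mul_lt_mul_of_pos_left hlow httpos)) hupper
    have hfin : C₁ / sn * tt k ≤ tt k * (C / sn - κ₂ * Δ k * Ω) := by
      rw [← hCsub]
      have : (C - Real.sqrt 2 * κ₂ * Ω) / sn ≤ C / sn - κ₂ * Δ k * Ω := by
        rw [sub_div]
        have : Real.sqrt 2 * κ₂ * Ω / sn ≥ κ₂ * Δ k * Ω := hΔbd
        linarith
      calc (C - Real.sqrt 2 * κ₂ * Ω) / sn * tt k = tt k * ((C - Real.sqrt 2 * κ₂ * Ω) / sn) := by ring
        _ ≤ tt k * (C / sn - κ₂ * Δ k * Ω) := mul_le_mul_of_nonneg_left this (le_of_lt httpos)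
    linarith
  -- summation
  have hne : (Finset.Icc k₀ n).Nonempty := Finset.nonempty_Icc.mpr hk₀.2.2.2
  have hsum : ∑ k ∈ Finset.Icc k₀ n, (C₁ / sn * tt k)
      < ∑ k ∈ Finset.Icc k₀ n, (Θ / (2 * (k:ℝ)) + (D k - D (k + 1))) :=
    Finset.sum_lt_sum_of_nonempty hne
      (fun k hk => key k (Finset.mem_Icc.mp hk).1 (Finset.mem_Icc.mp hk).2)
  have htel : ∑ k ∈ Finset.Icc k₀ n, (D k - D (k+1)) = D k₀ - D (n+1) :=
    telescope_D D k₀ n hk₀.2.2.2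
  have hsum1 : ∑ k ∈ Finset.Icc k₀ n, (Θ / (2 * (k:ℝ)) + (D k - D (k + 1)))
      = (Θ/2) * ∑ k ∈ Finset.Icc k₀ n, 1/(k:ℝ) + (D k₀ - D (n+1)) := by
    rw [Finset.sum_add_distrib, htel, Finset.mul_sum]
    congr 1
    apply Finset.sum_congr rfl; intro k _; ring
  have hlogsum : ∑ k ∈ Finset.Icc k₀ n, 1/(k:ℝ) ≤ 2 * Real.log 2 := by
    have h := sum_inv_le k₀ n hk₀.2.2.1 hk₀.2.2.2
    have hk₀1pos : (0:ℝ) < (k₀:ℝ) - 1 := by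
      have : (2:ℝ) ≤ (k₀:ℝ) := by exact_mod_cast hk₀.2.2.1
      linarith
    have hn4 : (n:ℝ) ≤ 4 * ((k₀:ℝ) - 1) := by
      have hnat : n ≤ 4 * (k₀ - 1) := by omega
      calc (n:ℝ) ≤ ((4 * (k₀ - 1) : ℕ) : ℝ) := by exact_mod_cast hnat
        _ = 4 * ((k₀:ℝ) - 1) := by
            push_cast [Nat.cast_sub (show 1 ≤ k₀ by omega)]; ring
    have hnpos : (0:ℝ) < (n:ℝ) := by exact_mod_cast (show 0 < n by omega)
    have h1 : Real.log (n:ℝ) ≤ Real.log (4 * ((k₀:ℝ) - 1)) :=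
      Real.log_le_log hnpos hn4
    have h2 : Real.log (4 * ((k₀:ℝ) - 1)) = Real.log 4 + Real.log ((k₀:ℝ) - 1) :=
      Real.log_mul (by norm_num) (ne_of_gt hk₀1pos)
    have h3 : Real.log (4:ℝ) = 2 * Real.log 2 := by
      rw [show (4:ℝ) = 2^2 by norm_num, Real.log_pow]; push_cast; ring
    linarith
  have hDk₀ : D k₀ ≤ Θ := hΘ xstar hxstar (x k₀) (hx k₀ (by omega))
  have hDn1 : 0 ≤ D (n+1) := by
    have hs := hstrong xstar hxstar (x (n+1)) (hx (n+1) (by omega))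
    have h2 : (0:ℝ) ≤ α/2 * ‖xstar - x (n+1)‖^2 := by positivity
    simp only [hDdef, bregman]
    linarith
  have hRHS : ∑ k ∈ Finset.Icc k₀ n, (Θ / (2 * (k:ℝ)) + (D k - D (k + 1)))
      ≤ Θ * (1 + Real.log 2) := by
    rw [hsum1]
    have : (Θ/2) * ∑ k ∈ Finset.Icc k₀ n, 1/(k:ℝ) ≤ (Θ/2) * (2 * Real.log 2) :=
      mul_le_mul_of_nonneg_left hlogsum (by linarith)
    linarith
  -- lower bound for LHS
  have httlow : ∀ k ∈ Finset.Icc k₀ n,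
      Real.sqrt (Θ*α)/(2*M) * (1/Real.sqrt (k:ℝ)) ≤ tt k := by
    intro k hk
    obtain ⟨hkl, hku⟩ := Finset.mem_Icc.mp hk
    have hk1 : 1 ≤ k := by omega
    have hkRpos : (0:ℝ) < (k:ℝ) := by exact_mod_cast (show 0 < k by omega)
    have hskpos : 0 < Real.sqrt (k:ℝ) := Real.sqrt_pos.mpr hkRpos
    have hEk : 0 < ‖E k‖ := norm_pos_iff.mpr (hE k hk1)
    have hEub : ‖E k‖ ≤ 2*M := by
      have h1 : ‖E k‖ ≤ ‖e k‖ + ‖e k - E k‖ := by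
        calc ‖E k‖ = ‖e k - (e k - E k)‖ := by congr 1; abel
          _ ≤ ‖e k‖ + ‖e k - E k‖ := norm_sub_le _ _
      have hsk1 : (1:ℝ) ≤ Real.sqrt ((k:ℝ)+1) := by
        nlinarith [Real.sq_sqrt (show (0:ℝ) ≤ (k:ℝ)+1 by linarith),
          Real.sqrt_nonneg ((k:ℝ)+1), hkRpos]
      have hΔ1 : Δ k ≤ 1 := by
        calc Δ k ≤ 1/Real.sqrt ((k:ℝ)+1) := (hΔ k hk1).2
          _ ≤ 1 := by rw [div_le_one (by linarith)]; exact hsk1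
      have hκΔ : κ₂ * Δ k ≤ κ₂ := by nlinarith
      have hek := hebd k hk1
      have herrk := herr k hk1
      have hmax1 : κ₁ ≤ M := le_max_left _ _
      have hmax2 : κ₂ ≤ M := le_max_right _ _
      linarith
    calc Real.sqrt (Θ*α)/(2*M) * (1/Real.sqrt (k:ℝ))
        = Real.sqrt (Θ*α)/(2*M*Real.sqrt (k:ℝ)) := by
          rw [div_mul_div_comm, mul_one]
      _ ≤ Real.sqrt (Θ*α)/(‖E k‖*Real.sqrt (k:ℝ)) := by
          apply div_le_div_of_nonneg_left (le_of_lt hΘα) (mul_pos hEk hskpos)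
          exact mul_le_mul_of_nonneg_right hEub (le_of_lt hskpos)
      _ = tt k := rfl
  have hsumtt : Real.sqrt (Θ*α)/(2*M) * ((2 - Real.sqrt 2) * sn)
      ≤ ∑ k ∈ Finset.Icc k₀ n, tt k := by
    have hstep1 : ∑ k ∈ Finset.Icc k₀ n, (Real.sqrt (Θ*α)/(2*M) * (1/Real.sqrt (k:ℝ)))
        ≤ ∑ k ∈ Finset.Icc k₀ n, tt k := Finset.sum_le_sum httlow
    rw [← Finset.mul_sum] at hstep1
    have hsqsum := sum_inv_sqrt_ge k₀ n (by omega) hk₀.2.2.2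
    have hsqrtbd : (2 - Real.sqrt 2) * sn ≤ 2*(Real.sqrt ((n:ℝ)+1) - Real.sqrt (k₀:ℝ)) := by
      have hk₀le : (k₀:ℝ) ≤ ((n:ℝ)+1)/2 := by
        have h2 : (2*(k₀:ℝ)) ≤ (n:ℝ)+1 := by exact_mod_cast hk₀.2.1
        linarith
      have h1 : Real.sqrt (k₀:ℝ) ≤ Real.sqrt (((n:ℝ)+1)/2) := Real.sqrt_le_sqrt hk₀le
      have h2 : Real.sqrt (((n:ℝ)+1)/2) = Real.sqrt ((n:ℝ)+1) / Real.sqrt 2 :=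
        Real.sqrt_div (by positivity) 2
      have h3 : (2:ℝ)/Real.sqrt 2 = Real.sqrt 2 := Real.div_sqrt
      have hsn1 : sn ≤ Real.sqrt ((n:ℝ)+1) := by
        rw [hsndef]; exact Real.sqrt_le_sqrt (by linarith)
      have hs2pos : (0:ℝ) < Real.sqrt 2 := Real.sqrt_pos.mpr (by norm_num)
      have h4 : 2 * Real.sqrt (k₀:ℝ) ≤ Real.sqrt 2 * Real.sqrt ((n:ℝ)+1) := by
        rw [h2] at h1
        calc 2 * Real.sqrt (k₀:ℝ) ≤ 2 * (Real.sqrt ((n:ℝ)+1) / Real.sqrt 2) := by linarith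
          _ = (2/Real.sqrt 2) * Real.sqrt ((n:ℝ)+1) := by ring
          _ = Real.sqrt 2 * Real.sqrt ((n:ℝ)+1) := by rw [h3]
      have h5 : (2 - Real.sqrt 2) * sn ≤ (2 - Real.sqrt 2) * Real.sqrt ((n:ℝ)+1) :=
        mul_le_mul_of_nonneg_left hsn1 (by linarith)
      nlinarith
    have hnn : (0:ℝ) ≤ Real.sqrt (Θ*α)/(2*M) := by positivity
    calc Real.sqrt (Θ*α)/(2*M) * ((2 - Real.sqrt 2) * sn)
        ≤ Real.sqrt (Θ*α)/(2*M) * (2*(Real.sqrt ((n:ℝ)+1) - Real.sqrt (k₀:ℝ))) :=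
          mul_le_mul_of_nonneg_left hsqrtbd hnn
      _ ≤ Real.sqrt (Θ*α)/(2*M) * ∑ k ∈ Finset.Icc k₀ n, 1/Real.sqrt (k:ℝ) :=
          mul_le_mul_of_nonneg_left hsqsum hnn
      _ ≤ ∑ k ∈ Finset.Icc k₀ n, tt k := hstep1
  -- the algebraic identity
  have hid : Real.sqrt (Θ/α) * Real.sqrt (Θ*α) = Θ := by
    rw [← Real.sqrt_mul (le_of_lt (div_pos hΘpos hα)),
      show Θ/α*(Θ*α) = Θ^2 by field_simp,
      Real.sqrt_sq hΘpos.le]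
  have hident : C₁/sn * (Real.sqrt (Θ*α)/(2*M) * ((2 - Real.sqrt 2) * sn))
      = Θ * (1 + Real.log 2) := by
    rw [hC₁def]
    have hsnne : sn ≠ 0 := ne_of_gt hsnpos
    have hMne : M ≠ 0 := ne_of_gt hMpos
    have h2ne : (2 - Real.sqrt 2) ≠ 0 := by intro h; nlinarith
    field_simp
    have hΘΘ : Real.sqrt Θ * Real.sqrt Θ = Θ := Real.mul_self_sqrt hΘpos.le
    linear_combination hid
  -- conclude
  have hchain : Θ * (1 + Real.log 2) < Θ * (1 + Real.log 2) := by
    calc Θ * (1 + Real.log 2)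
        = C₁/sn * (Real.sqrt (Θ*α)/(2*M) * ((2 - Real.sqrt 2) * sn)) := hident.symm
      _ ≤ C₁/sn * ∑ k ∈ Finset.Icc k₀ n, tt k :=
          mul_le_mul_of_nonneg_left hsumtt (by positivity)
      _ = ∑ k ∈ Finset.Icc k₀ n, (C₁ / sn * tt k) := by rw [Finset.mul_sum]
      _ < ∑ k ∈ Finset.Icc k₀ n, (Θ / (2 * (k:ℝ)) + (D k - D (k + 1))) := hsum
      _ ≤ Θ * (1 + Real.log 2) := hRHS
  exact absurd hchain (lt_irrefl _)
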